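/- Let ℓ > 0 and ℓ₂ = ℓ₃ = π. For every κ with 0 < κ < 1/ℓ, the quantity cosh(κπ) cosh(κℓ₁) + sinh(κπ) sinh(κℓ₁) · (κ⁴ℓ⁴ − 2κ²ℓ² + 5)/(4 − 4κ²ℓ²) is strictly greater than 1 for any ℓ₁ > 0. -/
import Mathlib


open Real

theorem negative_spectrum_symmetric_gap
    (ℓ ℓ₁ κ : ℝ) (hℓ : 0 < ℓ) (hℓ₁ : 0 < ℓ₁)
    (hκ : 0 < κ) (hκ' : κ < 1 / ℓ) :
    cosh (κ * π) * cosh (κ * ℓ₁)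
      + sinh (κ * π) * sinh (κ * ℓ₁) *
          ((κ^4 * ℓ^4 - 2 * κ^2 * ℓ^2 + 5) / (4 - 4 * κ^2 * ℓ^2)) > 1 := by
  have hx : κ * ℓ < 1 := (lt_div_iff₀ hℓ).mp hκ'
  have hx0 : 0 < κ * ℓ := mul_pos hκ hℓ
  have hd : 0 < 4 - 4 * κ^2 * ℓ^2 := by nlinarith
  have hf : 1 < (κ^4 * ℓ^4 - 2 * κ^2 * ℓ^2 + 5) / (4 - 4 * κ^2 * ℓ^2) := by
    rw [lt_div_iff₀ hd]; nlinarith [sq_nonneg (κ^2 * ℓ^2 + 1)]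
  have h1 : 0 < sinh (κ * π) := Real.sinh_pos_iff.mpr (mul_pos hκ pi_pos)
  have h2 : 0 < sinh (κ * ℓ₁) := Real.sinh_pos_iff.mpr (mul_pos hκ hℓ₁)
  have key : cosh (κ * π) * cosh (κ * ℓ₁) + sinh (κ * π) * sinh (κ * ℓ₁) * 1
      = cosh (κ * π + κ * ℓ₁) := by rw [cosh_add]; ring
  have := one_le_cosh (κ * π + κ * ℓ₁)
  nlinarith [mul_pos h1 h2]
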